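/- arXiv:1605.08435 — 2 statements merged into one kernel-verified Lean document; each statement's English description precedes it below -/
import Mathlib

section
/- Let C be a triangulated category with a weight structure w, and let A → C' → B → A[1] be a distinguished triangle. Then for any fixed (i−1)-weight decompositions w_{≤i−1}A → A → w_{≥i}A and w_{≤i−1}B → B → w_{≥i}B there exists an (i−1)-weight decomposition of C' such that w_{≤i−1}C' is an extension of w_{≤i−1}B by w_{≤i−1}A, i.e., there is a distinguished triangle w_{≤i−1}A → w_{≤i−1}C' → w_{≤i−1}B. -/
open CategoryTheory CategoryTheory.Limits CategoryTheory.Pretriangulated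

universe v u v₂ u₂

/-- `X` is a retract of `Y`: the identity of `X` factors through `Y`. -/
def IsRetract {C : Type u} [Category.{v} C] (X Y : C) : Prop :=
  ∃ (i : X ⟶ Y) (r : Y ⟶ X), i ≫ r = 𝟙 X

variable (C : Type u) [Category.{v} C] [HasZeroObject C] [Preadditive C] [HasShift C ℤ]
  [∀ n : ℤ, (shiftFunctor C n).Additive] [Pretriangulated C]

/-- A weight structure on a triangulated category `C`, given by the classes
`LE = C_{w≤0}` and `GE = C_{w≥0}`. -/
structure WeightStructure where
  LE : Set C
  GE : Set C
  retract_mem_LE : ∀ ⦃X Y : C⦄, IsRetract X Y → Y ∈ LE → X ∈ LE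
  retract_mem_GE : ∀ ⦃X Y : C⦄, IsRetract X Y → Y ∈ GE → X ∈ GE
  shift_LE : ∀ X ∈ LE, X⟦(-1 : ℤ)⟧ ∈ LE
  shift_GE : ∀ X ∈ GE, X⟦(1 : ℤ)⟧ ∈ GE
  orthogonal : ∀ ⦃X Y : C⦄, X ∈ LE → Y ∈ GE → ∀ f : X ⟶ Y⟦(1 : ℤ)⟧, f = 0
  exists_decomp : ∀ M : C, ∃ (B A : C) (f : B ⟶ M) (g : M ⟶ A) (h : A ⟶ B⟦(1 : ℤ)⟧),
    (Triangle.mk f g h ∈ distTriang C) ∧ B ∈ LE ∧ A⟦(-1 : ℤ)⟧ ∈ GE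

namespace WeightStructure

variable {C}

/-- `C_{w≤n} = C_{w≤0}[n]`. -/
def le (w : WeightStructure C) (n : ℤ) : Set C := {X : C | X⟦(-n)⟧ ∈ w.LE}

/-- `C_{w≥n} = C_{w≥0}[n]`. -/
def ge (w : WeightStructure C) (n : ℤ) : Set C := {X : C | X⟦(-n)⟧ ∈ w.GE}

/-- `C_{w=n} = C_{w≤n} ∩ C_{w≥n}`. -/
def heart (w : WeightStructure C) (n : ℤ) : Set C := w.le n ∩ w.ge n

end WeightStructure

variable {C}

/-- The envelope of a class `D`: the smallest class containing `D` and all zero objects that is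
closed under extensions and retracts. -/
inductive Envelope (D : Set C) : C → Prop
  | of (X : C) (hX : X ∈ D) : Envelope D X
  | zero (Z : C) (hZ : IsZero Z) : Envelope D Z
  | ext (T : Triangle C) (hT : T ∈ distTriang C)
      (h₁ : Envelope D T.obj₁) (h₃ : Envelope D T.obj₃) : Envelope D T.obj₂
  | retract (X Y : C) (h : IsRetract X Y) (hY : Envelope D Y) : Envelope D X

namespace WeightStructure

variable (w : WeightStructure C)

lemma mem_LE_of_iso {X Y : C} (e : X ≅ Y) (hY : Y ∈ w.LE) : X ∈ w.LE :=
  w.retract_mem_LE ⟨e.hom, e.inv, e.hom_inv_id⟩ hY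

lemma mem_GE_of_iso {X Y : C} (e : X ≅ Y) (hY : Y ∈ w.GE) : X ∈ w.GE :=
  w.retract_mem_GE ⟨e.hom, e.inv, e.hom_inv_id⟩ hY

lemma mem_LE_shift_nat {X : C} (hX : X ∈ w.LE) :
    ∀ (n : ℕ) (k : ℤ), k = -(n : ℤ) → X⟦k⟧ ∈ w.LE
  | 0, k, hk => by
      subst hk
      exact w.mem_LE_of_iso ((shiftFunctorZero C ℤ).app X) hX
  | (n+1), k, hk => by
      have h1 : X⟦(-(n : ℤ))⟧ ∈ w.LE := mem_LE_shift_nat hX n _ rfl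
      have h2 := w.shift_LE _ h1
      exact w.mem_LE_of_iso ((shiftFunctorAdd' C (-(n : ℤ)) (-1) k (by omega)).app X) h2

lemma mem_LE_shift {X : C} (hX : X ∈ w.LE) (k : ℤ) (hk : k ≤ 0) : X⟦k⟧ ∈ w.LE :=
  w.mem_LE_shift_nat hX (-k).toNat k (by omega)

lemma le_shift {X : C} {n : ℤ} (hX : X ∈ w.le n) (k : ℤ) : X⟦k⟧ ∈ w.le (n + k) := by
  exact w.mem_LE_of_iso
    (((shiftFunctorAdd' C k (-(n + k)) (-n) (by ring)).app X).symm) hX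

lemma ge_shift {X : C} {n : ℤ} (hX : X ∈ w.ge n) (k : ℤ) : X⟦k⟧ ∈ w.ge (n + k) := by
  exact w.mem_GE_of_iso
    (((shiftFunctorAdd' C k (-(n + k)) (-n) (by ring)).app X).symm) hX

lemma hom_zero {X Y : C} {m n : ℤ} (hX : X ∈ w.le m) (hY : Y ∈ w.ge n) (hmn : m < n)
    (f : X ⟶ Y) : f = 0 := by
  have hX' : X⟦1 - n⟧ ∈ w.LE := by
    have h1 : X⟦(-m : ℤ)⟧⟦m + (1 - n)⟧ ∈ w.LE := w.mem_LE_shift hX _ (by omega)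
    exact w.mem_LE_of_iso ((shiftFunctorAdd' C (-m) (m + (1 - n)) (1 - n) (by ring)).app X) h1
  have hY' : Y⟦(-n : ℤ)⟧ ∈ w.GE := hY
  have e : Y⟦(1 : ℤ) - n⟧ ≅ (Y⟦(-n : ℤ)⟧)⟦(1 : ℤ)⟧ :=
    (shiftFunctorAdd' C (-n) 1 (1 - n) (by ring)).app Y
  have h0 := w.orthogonal hX' hY' (f⟦(1 : ℤ) - n⟧' ≫ e.hom)
  have h1 : f⟦(1 : ℤ) - n⟧' = 0 := by
    rw [← Category.comp_id (f⟦(1 : ℤ) - n⟧'), ← e.hom_inv_id, ← Category.assoc, h0, zero_comp]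
  apply (shiftFunctor C ((1 : ℤ) - n)).map_injective
  rw [h1, Functor.map_zero]

lemma mem_ge_of_orthogonal (n : ℤ) (X : C)
    (hX : ∀ L ∈ w.le (n - 1), ∀ f : L ⟶ X, f = 0) : X ∈ w.ge n := by
  obtain ⟨Bd, Ad, f, g, h, hTd, hBd, hAd⟩ := w.exists_decomp (X⟦(1 : ℤ) - n⟧)
  have hf : f = 0 := by
    have hB' : Bd⟦n - 1⟧ ∈ w.le (n - 1) := by
      exact w.mem_LE_of_iso ((shiftFunctorCompIsoId C (n - 1) (-(n - 1)) (by ring)).app Bd) hBd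
    have e : (X⟦(1 : ℤ) - n⟧)⟦n - 1⟧ ≅ X :=
      (shiftFunctorCompIsoId C ((1 : ℤ) - n) (n - 1) (by ring)).app X
    have h0 := hX _ hB' (f⟦n - 1⟧' ≫ e.hom)
    have h1 : f⟦n - 1⟧' = 0 := by
      rw [← Category.comp_id (f⟦n - 1⟧'), ← e.hom_inv_id, ← Category.assoc, h0, zero_comp]
    apply (shiftFunctor C (n - 1)).map_injective
    rw [h1, Functor.map_zero]
  obtain ⟨r, hr⟩ : ∃ r : Ad ⟶ X⟦(1 : ℤ) - n⟧, 𝟙 _ = g ≫ r := Pretriangulated.Triangle.yoneda_exact₂ _ hTd (𝟙 (X⟦(1 : ℤ) - n⟧))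
    (by change f ≫ 𝟙 _ = 0; rw [hf, zero_comp])
  have hret : IsRetract ((X⟦(1 : ℤ) - n⟧)⟦(-1 : ℤ)⟧) (Ad⟦(-1 : ℤ)⟧) :=
    ⟨g⟦(-1 : ℤ)⟧', r⟦(-1 : ℤ)⟧', by
      rw [← Functor.map_comp, ← hr, CategoryTheory.Functor.map_id]⟩
  have h1 : (X⟦(1 : ℤ) - n⟧)⟦(-1 : ℤ)⟧ ∈ w.GE := w.retract_mem_GE hret hAd
  exact w.mem_GE_of_iso ((shiftFunctorAdd' C ((1 : ℤ) - n) (-1) (-n) (by ring)).app X) h1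

lemma mem_le_of_orthogonal (m : ℤ) (X : C)
    (hX : ∀ G ∈ w.ge (m + 1), ∀ f : X ⟶ G, f = 0) : X ∈ w.le m := by
  obtain ⟨Bd, Ad, f, g, h, hTd, hBd, hAd⟩ := w.exists_decomp (X⟦(-m : ℤ)⟧)
  have hg : g = 0 := by
    have hA' : Ad⟦m⟧ ∈ w.ge (m + 1) := by
      exact w.mem_GE_of_iso
        (((shiftFunctorAdd' C m (-(m + 1)) (-1) (by ring)).app Ad).symm) hAd
    have e : X ≅ (X⟦(-m : ℤ)⟧)⟦m⟧ :=
      ((shiftFunctorCompIsoId C (-m) m (by ring)).app X).symm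
    have h0 := hX _ hA' (e.hom ≫ g⟦m⟧')
    have h1 : g⟦m⟧' = 0 := by
      rw [← Category.id_comp (g⟦m⟧'), ← e.inv_hom_id, Category.assoc, h0, comp_zero]
    apply (shiftFunctor C m).map_injective
    rw [h1, Functor.map_zero]
  obtain ⟨r, hr⟩ := Pretriangulated.Triangle.coyoneda_exact₂ _ hTd (𝟙 (X⟦(-m : ℤ)⟧))
    (by change 𝟙 _ ≫ g = 0; rw [hg, comp_zero])
  exact w.retract_mem_LE ⟨r, f, hr.symm⟩ hBd

lemma le_ext {X₁ X₂ X₃ : C} {m : ℤ} (f₁ : X₁ ⟶ X₂) (f₂ : X₂ ⟶ X₃) (f₃ : X₃ ⟶ X₁⟦(1 : ℤ)⟧)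
    (hT : Triangle.mk f₁ f₂ f₃ ∈ distTriang C) (h₁ : X₁ ∈ w.le m) (h₃ : X₃ ∈ w.le m) :
    X₂ ∈ w.le m := by
  apply w.mem_le_of_orthogonal
  intro G hG φ
  obtain ⟨ψ, hψ⟩ := Pretriangulated.Triangle.yoneda_exact₂ _ hT φ
    (w.hom_zero h₁ hG (by omega) _)
  rw [hψ, w.hom_zero h₃ hG (by omega) ψ]; exact comp_zero

end WeightStructure

theorem stmt_5 (w : WeightStructure C) (i : ℤ)
    (A C' B : C) (a : A ⟶ C') (b : C' ⟶ B) (c : B ⟶ A⟦(1 : ℤ)⟧)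
    (hT : Triangle.mk a b c ∈ distTriang C)
    (LA GA : C) (fA : LA ⟶ A) (gA : A ⟶ GA) (hA : GA ⟶ LA⟦(1 : ℤ)⟧)
    (hTA : Triangle.mk fA gA hA ∈ distTriang C)
    (hLA : LA ∈ w.le (i - 1)) (hGA : GA ∈ w.ge i)
    (LB GB : C) (fB : LB ⟶ B) (gB : B ⟶ GB) (hB : GB ⟶ LB⟦(1 : ℤ)⟧)
    (hTB : Triangle.mk fB gB hB ∈ distTriang C)
    (hLB : LB ∈ w.le (i - 1)) (hGB : GB ∈ w.ge i) :
    ∃ (LC GC : C) (fC : LC ⟶ C') (gC : C' ⟶ GC) (hC : GC ⟶ LC⟦(1 : ℤ)⟧),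
      (Triangle.mk fC gC hC ∈ distTriang C) ∧ LC ∈ w.le (i - 1) ∧ GC ∈ w.ge i ∧
      ∃ (u : LA ⟶ LC) (v : LC ⟶ LB) (t : LB ⟶ LA⟦(1 : ℤ)⟧),
        Triangle.mk u v t ∈ distTriang C := by
  -- Step 1: construct `g : LB ⟶ LA⟦1⟧` lifting `fB ≫ c` through `fA⟦1⟧`.
  have hGA1 : GA⟦(1 : ℤ)⟧ ∈ w.ge (i + 1) := w.ge_shift hGA 1
  have hLBGA1 : (fB ≫ c) ≫ gA⟦(1 : ℤ)⟧' = 0 := w.hom_zero hLB hGA1 (by omega) _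
  obtain ⟨g', hg'⟩ : ∃ g' : LB ⟶ LA⟦(1 : ℤ)⟧, fB ≫ c = g' ≫ (-fA⟦(1 : ℤ)⟧') := Pretriangulated.Triangle.coyoneda_exact₁ _
    (rot_of_distTriang _ hTA) (fB ≫ c) hLBGA1
  have hgfa : (-g') ≫ fA⟦(1 : ℤ)⟧' = fB ≫ c := by
    rw [hg', Preadditive.neg_comp, Preadditive.comp_neg]
  set g : LB ⟶ LA⟦(1 : ℤ)⟧ := -g' with hg_def
  -- Step 2: complete `g` into a distinguished triangle `LA ⟶ LC ⟶ LB ⟶ LA⟦1⟧`.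
  obtain ⟨LC, u, v, hTL⟩ := Pretriangulated.distinguished_cocone_triangle₂ g
  have hLC : LC ∈ w.le (i - 1) := w.le_ext u v g hTL hLA hLB
  -- Step 3: complete `(fA, fB)` into a morphism of triangles; get `s : LC ⟶ C'`.
  obtain ⟨s, hs₁, hs₂⟩ := Pretriangulated.complete_distinguished_triangle_morphism₂
    (Triangle.mk u v g) (Triangle.mk a b c) hTL hT fA fB hgfa
  change LC ⟶ C' at s
  change u ≫ s = fA ≫ a at hs₁; change v ≫ fB = s ≫ b at hs₂
  -- Step 4: take the cone of `s`.
  obtain ⟨GC, σ, h, hTC⟩ := Pretriangulated.distinguished_cocone_triangle s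
  have hsσ : s ≫ σ = 0 := Pretriangulated.comp_distTriang_mor_zero₁₂ _ hTC
  have hhs : h ≫ s⟦(1 : ℤ)⟧' = 0 := Pretriangulated.comp_distTriang_mor_zero₃₁ _ hTC
  have hgu : g ≫ u⟦(1 : ℤ)⟧' = 0 := Pretriangulated.comp_distTriang_mor_zero₃₁ _ hTL
  have hbc : b ≫ c = 0 := Pretriangulated.comp_distTriang_mor_zero₂₃ _ hT
  -- Step 5: `GC ∈ w.ge i`.
  have hGC : GC ∈ w.ge i := by
    apply w.mem_ge_of_orthogonal
    intro L hL φ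
    -- Key: every map `L ⟶ C'` composes to zero with `σ`.
    have key : ∀ θ : L ⟶ C', θ ≫ σ = 0 := by
      intro θ
      obtain ⟨κ, hκ⟩ : ∃ κ : L ⟶ LB, θ ≫ b = κ ≫ fB := Pretriangulated.Triangle.coyoneda_exact₂ _ hTB (θ ≫ b)
        (w.hom_zero hL hGB (by omega) _)
      have hκg : (κ ≫ g) ≫ fA⟦(1 : ℤ)⟧' = 0 := by
        rw [Category.assoc, hgfa, ← Category.assoc, ← hκ, Category.assoc, hbc, comp_zero]
      obtain ⟨δ, hδ⟩ : ∃ δ : L ⟶ GA, κ ≫ g = δ ≫ hA := Pretriangulated.Triangle.coyoneda_exact₁ _ hTA (κ ≫ g) hκg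
      have hκg0 : κ ≫ g = 0 := by
        rw [hδ, w.hom_zero hL hGA (by omega) δ, zero_comp]
      obtain ⟨μ, hμ⟩ : ∃ μ : L ⟶ LC, κ = μ ≫ v := Pretriangulated.Triangle.coyoneda_exact₃ _ hTL κ hκg0
      have hθ2 : (θ - μ ≫ s) ≫ b = 0 := by
        rw [Preadditive.sub_comp, Category.assoc, ← hs₂, ← Category.assoc, ← hμ, ← hκ, sub_self]
      obtain ⟨ν, hν⟩ : ∃ ν : L ⟶ A, θ - μ ≫ s = ν ≫ a := Pretriangulated.Triangle.coyoneda_exact₂ _ hT (θ - μ ≫ s) hθ2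
      have haσ : fA ≫ (a ≫ σ) = 0 := by
        rw [← Category.assoc, ← hs₁, Category.assoc, hsσ, comp_zero]
      obtain ⟨ρ, hρ⟩ : ∃ ρ : GA ⟶ GC, a ≫ σ = gA ≫ ρ := Pretriangulated.Triangle.yoneda_exact₂ _ hTA (a ≫ σ) haσ
      have : θ ≫ σ = (θ - μ ≫ s) ≫ σ + (μ ≫ s) ≫ σ := by rw [Preadditive.sub_comp]; abel
      rw [this, hν, Category.assoc, hρ, ← Category.assoc,
        w.hom_zero hL hGA (by omega) (ν ≫ gA), zero_comp,
        Category.assoc, hsσ, comp_zero, add_zero]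
    -- `φ ≫ h = 0`.
    have hψ0 : φ ≫ h = 0 := by
      have hψs : (φ ≫ h) ≫ s⟦(1 : ℤ)⟧' = 0 := by
        rw [Category.assoc, hhs, comp_zero]
      have hψv : ((φ ≫ h) ≫ v⟦(1 : ℤ)⟧') ≫ fB⟦(1 : ℤ)⟧' = 0 := by
        rw [Category.assoc, Category.assoc, ← Functor.map_comp, hs₂, Functor.map_comp,
          ← Category.assoc, ← Category.assoc, hψs, zero_comp]
      obtain ⟨χ, hχ⟩ : ∃ χ : L ⟶ GB, (φ ≫ h) ≫ v⟦(1 : ℤ)⟧' = χ ≫ hB := Pretriangulated.Triangle.coyoneda_exact₁ _ hTB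
        ((φ ≫ h) ≫ v⟦(1 : ℤ)⟧') hψv
      have hψv0 : (φ ≫ h) ≫ v⟦(1 : ℤ)⟧' = 0 := by
        rw [hχ, w.hom_zero hL hGB (by omega) χ, zero_comp]
      obtain ⟨α, hα⟩ : ∃ α : L ⟶ LA⟦(1 : ℤ)⟧, φ ≫ h = α ≫ (-u⟦(1 : ℤ)⟧') := Pretriangulated.Triangle.coyoneda_exact₁ _
        (rot_of_distTriang _ hTL) (φ ≫ h) hψv0
      change L ⟶ LA⟦(1 : ℤ)⟧ at α
      have hα' : (-α) ≫ u⟦(1 : ℤ)⟧' = φ ≫ h := by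
        rw [hα, Preadditive.neg_comp, Preadditive.comp_neg]
      have hαfa : ((-α) ≫ fA⟦(1 : ℤ)⟧') ≫ a⟦(1 : ℤ)⟧' = 0 := by
        rw [Category.assoc, ← Functor.map_comp, ← hs₁, Functor.map_comp, ← Category.assoc,
          hα', Category.assoc, hhs, comp_zero]
      obtain ⟨ε, hε⟩ : ∃ ε : L ⟶ B, (-α) ≫ fA⟦(1 : ℤ)⟧' = ε ≫ c := Pretriangulated.Triangle.coyoneda_exact₁ _ hT
        ((-α) ≫ fA⟦(1 : ℤ)⟧') hαfa
      obtain ⟨κ', hκ'⟩ : ∃ κ' : L ⟶ LB, ε = κ' ≫ fB := Pretriangulated.Triangle.coyoneda_exact₂ _ hTB ε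
        (w.hom_zero hL hGB (by omega) _)
      have hsub : ((-α) - κ' ≫ g) ≫ fA⟦(1 : ℤ)⟧' = 0 := by
        rw [Preadditive.sub_comp, Category.assoc, hgfa, ← Category.assoc, ← hκ', ← hε, sub_self]
      obtain ⟨δ', hδ'⟩ : ∃ δ' : L ⟶ GA, (-α) - κ' ≫ g = δ' ≫ hA := Pretriangulated.Triangle.coyoneda_exact₁ _ hTA
        ((-α) - κ' ≫ g) hsub
      have hαg : (-α) = κ' ≫ g := by
        have : (-α) - κ' ≫ g = 0 := by
          rw [hδ', w.hom_zero hL hGA (by omega) δ', zero_comp]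
        rwa [sub_eq_zero] at this
      rw [← hα', hαg, Category.assoc, hgu, comp_zero]
    obtain ⟨θ, hθ⟩ : ∃ θ : L ⟶ C', φ = θ ≫ σ := Pretriangulated.Triangle.coyoneda_exact₃ _ hTC φ hψ0
    rw [hθ, key θ]
  exact ⟨LC, GC, s, σ, h, hTC, hLC, hGC, u, v, g, hTL⟩
end

section
/- Let C be a triangulated category with a weight structure w and let i ≤ j be integers. Then the class C_{[i,j]} = C_{w≥i} ∩ C_{w≤j} equals the extension-closure of the union ⋃_{i≤k≤j} C_{w=k}, i.e., the smallest class containing 0 and all objects of C_{w=k} for i ≤ k ≤ j and closed under extensions. -/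
open CategoryTheory CategoryTheory.Limits CategoryTheory.Pretriangulated

universe v u v₂ u₂

variable (C : Type u) [Category.{v} C] [HasZeroObject C] [Preadditive C] [HasShift C ℤ]
  [∀ n : ℤ, (shiftFunctor C n).Additive] [Pretriangulated C]

variable {C}

/-- The extension-closure of a class `D`: the smallest class containing `D` and all zero
objects that is closed under extensions. -/
inductive ExtClosure (D : Set C) : C → Prop
  | of (X : C) (hX : X ∈ D) : ExtClosure D X
  | zero (Z : C) (hZ : IsZero Z) : ExtClosure D Z
  | ext (T : Triangle C) (hT : T ∈ distTriang C)
      (h₁ : ExtClosure D T.obj₁) (h₃ : ExtClosure D T.obj₃) : ExtClosure D T.obj₂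

namespace WeightStructure

variable (w : WeightStructure C)

lemma memLE_of_iso {X Y : C} (e : X ≅ Y) (h : X ∈ w.LE) : Y ∈ w.LE :=
  w.retract_mem_LE ⟨e.inv, e.hom, e.inv_hom_id⟩ h

lemma memGE_of_iso {X Y : C} (e : X ≅ Y) (h : X ∈ w.GE) : Y ∈ w.GE :=
  w.retract_mem_GE ⟨e.inv, e.hom, e.inv_hom_id⟩ h

lemma shift_LE_of_nonpos {X : C} (h : X ∈ w.LE) : ∀ k : ℤ, k ≤ 0 → X⟦k⟧ ∈ w.LE := by
  intro k
  refine Int.le_induction_down (motive := fun k _ => X⟦k⟧ ∈ w.LE)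
    (w.memLE_of_iso ((shiftFunctorZero C ℤ).symm.app X) h) (fun n _ ih => ?_) k
  exact w.memLE_of_iso ((shiftFunctorAdd' C n (-1) (n - 1) (by ring)).symm.app X)
    (w.shift_LE _ ih)

lemma shift_GE_of_nonneg {X : C} (h : X ∈ w.GE) : ∀ k : ℤ, 0 ≤ k → X⟦k⟧ ∈ w.GE := by
  intro k
  refine Int.le_induction (motive := fun k _ => X⟦k⟧ ∈ w.GE)
    (w.memGE_of_iso ((shiftFunctorZero C ℤ).symm.app X) h) (fun n _ ih => ?_) k
  exact w.memGE_of_iso ((shiftFunctorAdd' C n 1 (n + 1) rfl).symm.app X)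
    (w.shift_GE _ ih)

lemma mem_le_of_iso {X Y : C} (e : X ≅ Y) {n : ℤ} (h : X ∈ w.le n) : Y ∈ w.le n :=
  w.memLE_of_iso ((shiftFunctor C (-n)).mapIso e) h

lemma mem_ge_of_iso {X Y : C} (e : X ≅ Y) {n : ℤ} (h : X ∈ w.ge n) : Y ∈ w.ge n :=
  w.memGE_of_iso ((shiftFunctor C (-n)).mapIso e) h

lemma le_mono {n m : ℤ} (hnm : n ≤ m) {X : C} (h : X ∈ w.le n) : X ∈ w.le m :=
  w.memLE_of_iso ((shiftFunctorAdd' C (-n) (n - m) (-m) (by ring)).symm.app X)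
    (w.shift_LE_of_nonpos h (n - m) (by omega))

lemma ge_mono {n m : ℤ} (hmn : m ≤ n) {X : C} (h : X ∈ w.ge n) : X ∈ w.ge m :=
  w.memGE_of_iso ((shiftFunctorAdd' C (-n) (n - m) (-m) (by ring)).symm.app X)
    (w.shift_GE_of_nonneg h (n - m) (by omega))

lemma shift_mem_le {X : C} {n : ℤ} (h : X ∈ w.le n) (m : ℤ) : X⟦m⟧ ∈ w.le (n + m) :=
  w.memLE_of_iso ((shiftFunctorAdd' C m (-(n + m)) (-n) (by ring)).app X) h

lemma shift_mem_ge {X : C} {n : ℤ} (h : X ∈ w.ge n) (m : ℤ) : X⟦m⟧ ∈ w.ge (n + m) :=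
  w.memGE_of_iso ((shiftFunctorAdd' C m (-(n + m)) (-n) (by ring)).app X) h

lemma retract_mem_le {X Y : C} (h : IsRetract X Y) {n : ℤ} (hY : Y ∈ w.le n) : X ∈ w.le n := by
  obtain ⟨f, r, hfr⟩ := h
  exact w.retract_mem_LE ⟨(shiftFunctor C (-n)).map f, (shiftFunctor C (-n)).map r,
    by rw [← Functor.map_comp, hfr, CategoryTheory.Functor.map_id]⟩ hY

lemma retract_mem_ge {X Y : C} (h : IsRetract X Y) {n : ℤ} (hY : Y ∈ w.ge n) : X ∈ w.ge n := by
  obtain ⟨f, r, hfr⟩ := h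
  exact w.retract_mem_GE ⟨(shiftFunctor C (-n)).map f, (shiftFunctor C (-n)).map r,
    by rw [← Functor.map_comp, hfr, CategoryTheory.Functor.map_id]⟩ hY

open ZeroObject in
lemma zero_mem_le {Z : C} (hZ : IsZero Z) (n : ℤ) : Z ∈ w.le n := by
  obtain ⟨B, A, f, g, h, _, hB, _⟩ := w.exists_decomp (0 : C)
  refine w.retract_mem_le ⟨0, 0, hZ.eq_of_src _ _⟩ (show B⟦n⟧ ∈ w.le n from ?_)
  exact w.memLE_of_iso ((shiftFunctorCompIsoId C n (-n) (by ring)).symm.app B) hB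

open ZeroObject in
lemma zero_mem_ge {Z : C} (hZ : IsZero Z) (n : ℤ) : Z ∈ w.ge n := by
  obtain ⟨B, A, f, g, h, _, _, hA⟩ := w.exists_decomp (0 : C)
  refine w.retract_mem_ge ⟨0, 0, hZ.eq_of_src _ _⟩
    (show (A⟦(-1 : ℤ)⟧)⟦n⟧ ∈ w.ge n from ?_)
  exact w.memGE_of_iso ((shiftFunctorCompIsoId C n (-n) (by ring)).symm.app _) hA

/-- Generalized orthogonality: maps from `C_{w≤n}` to `C_{w≥m}` vanish when `n < m`. -/
lemma hom_eq_zero {X Y : C} {n m : ℤ} (hX : X ∈ w.le n) (hY : Y ∈ w.ge m) (hnm : n < m)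
    (f : X ⟶ Y) : f = 0 := by
  have hY' : Y ∈ w.ge (n + 1) := w.ge_mono (by omega) hY
  have hY'' : Y⟦-(n + 1)⟧ ∈ w.GE := hY'
  set e : Y⟦-n⟧ ≅ (Y⟦-(n + 1)⟧)⟦(1 : ℤ)⟧ :=
    (shiftFunctorAdd' C (-(n + 1)) 1 (-n) (by ring)).app Y
  have h0 : (shiftFunctor C (-n)).map f ≫ e.hom = 0 := w.orthogonal hX hY'' _
  have h1 : (shiftFunctor C (-n)).map f = 0 := by
    have := h0 =≫ e.inv
    simpa using this
  apply (shiftFunctor C (-n)).map_injective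
  simpa using h1

/-- Weight decomposition at level `n`. -/
lemma exists_decomp_level (M : C) (n : ℤ) :
    ∃ (B A : C) (f : B ⟶ M) (g : M ⟶ A) (h : A ⟶ B⟦(1 : ℤ)⟧),
      (Triangle.mk f g h ∈ distTriang C) ∧ B ∈ w.le n ∧ A ∈ w.ge (n + 1) := by
  obtain ⟨B₀, A₀, f₀, g₀, h₀, hdist, hB₀, hA₀⟩ := w.exists_decomp (M⟦-n⟧)
  set T' := (CategoryTheory.shiftFunctor (Triangle C) n).obj (Triangle.mk f₀ g₀ h₀) with hT'
  have hT'dist : T' ∈ distTriang C := Triangle.shift_distinguished _ hdist n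
  set e : (M⟦-n⟧)⟦n⟧ ≅ M := (shiftFunctorCompIsoId C (-n) n (by ring)).app M with he
  refine ⟨B₀⟦n⟧, A₀⟦n⟧, T'.mor₁ ≫ e.hom, e.inv ≫ T'.mor₂, T'.mor₃, ?_, ?_, ?_⟩
  · refine isomorphic_distinguished _ hT'dist _ ?_
    exact Triangle.isoMk _ _ (Iso.refl _) e.symm (Iso.refl _)
      (by change (T'.mor₁ ≫ e.hom) ≫ e.inv = 𝟙 T'.obj₁ ≫ T'.mor₁; rw [Category.id_comp]; exact (Category.assoc _ _ _).trans ((congrArg (T'.mor₁ ≫ ·) e.hom_inv_id).trans (Category.comp_id _)))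
      (by change (e.inv ≫ T'.mor₂) ≫ 𝟙 T'.obj₃ = e.inv ≫ T'.mor₂; simp)
      (by change T'.mor₃ ≫ (shiftFunctor C 1).map (𝟙 T'.obj₁) = 𝟙 T'.obj₃ ≫ T'.mor₃; simp)
  · exact w.memLE_of_iso ((shiftFunctorCompIsoId C n (-n) (by ring)).symm.app B₀) hB₀
  · exact w.memGE_of_iso ((shiftFunctorAdd' C n (-(n + 1)) (-1) (by ring)).app A₀) hA₀

lemma le_ext_s8 {T : Triangle C} (hT : T ∈ distTriang C) {n : ℤ}
    (h₁ : T.obj₁ ∈ w.le n) (h₃ : T.obj₃ ∈ w.le n) : T.obj₂ ∈ w.le n := by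
  obtain ⟨X, Y, f, g, h, hdist, hX, hY⟩ := w.exists_decomp_level T.obj₂ n
  have hg0 : g = 0 := by
    have h1 : T.mor₁ ≫ g = 0 := w.hom_eq_zero h₁ hY (by omega) _
    obtain ⟨g', hg'⟩ := Triangle.yoneda_exact₂ T hT g h1
    rw [hg', w.hom_eq_zero h₃ hY (by omega) g', comp_zero]
  obtain ⟨s, hs⟩ := Triangle.coyoneda_exact₂ _ hdist (𝟙 T.obj₂)
    (by change 𝟙 T.obj₂ ≫ g = 0; rw [hg0, comp_zero])
  exact w.retract_mem_le ⟨s, f, hs.symm⟩ hX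

lemma ge_ext {T : Triangle C} (hT : T ∈ distTriang C) {n : ℤ}
    (h₁ : T.obj₁ ∈ w.ge n) (h₃ : T.obj₃ ∈ w.ge n) : T.obj₂ ∈ w.ge n := by
  obtain ⟨X, Y, f, g, h, hdist, hX, hY⟩ := w.exists_decomp_level T.obj₂ (n - 1)
  have hX' : X ∈ w.le (n - 1) := hX
  have hY' : Y ∈ w.ge n := by simpa using hY
  have hf0 : f = 0 := by
    have h1 : f ≫ T.mor₂ = 0 := w.hom_eq_zero hX' h₃ (by omega) _
    obtain ⟨f', hf'⟩ := Triangle.coyoneda_exact₂ T hT f h1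
    rw [hf', w.hom_eq_zero hX' h₁ (by omega) f', zero_comp]
  obtain ⟨r, hr⟩ := Triangle.yoneda_exact₂ _ hdist (𝟙 T.obj₂)
    (by change f ≫ 𝟙 T.obj₂ = 0; rw [hf0, zero_comp])
  exact w.retract_mem_ge ⟨g, r, hr.symm⟩ hY'

end WeightStructure

lemma ExtClosure.mono {D D' : Set C} (h : D ⊆ D') {X : C} (hX : ExtClosure D X) :
    ExtClosure D' X := by
  induction hX with
  | of X hX => exact ExtClosure.of X (h hX)
  | zero Z hZ => exact ExtClosure.zero Z hZ
  | ext T hT _ _ ih₁ ih₃ => exact ExtClosure.ext T hT ih₁ ih₃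

lemma key_induction (w : WeightStructure C) :
    ∀ (n : ℕ) (i : ℤ) (X : C), X ∈ w.ge i → X ∈ w.le (i + n) →
      ExtClosure {Y : C | ∃ k : ℤ, i ≤ k ∧ k ≤ i + n ∧ Y ∈ w.heart k} X := by
  intro n
  induction n with
  | zero =>
    intro i X hge hle
    exact ExtClosure.of X ⟨i, le_refl i, by omega, by simpa using hle, hge⟩
  | succ n ih =>
    intro i X hge hle
    set j : ℤ := i + (n + 1 : ℕ) with hj
    obtain ⟨B, A, f, g, h, hdist, hB, hA⟩ := w.exists_decomp_level X (j - 1)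
    have hA' : A ∈ w.ge j := by simpa using hA
    have hAle : A ∈ w.le j := by
      have := w.le_ext_s8 (rot_of_distTriang _ hdist) (n := j)
      refine this hle ?_
      have h2 : B⟦(1 : ℤ)⟧ ∈ w.le (j - 1 + 1) := w.shift_mem_le hB 1
      have e : j - 1 + 1 = j := by omega
      rw [e] at h2
      exact h2
    have hBge : B ∈ w.ge i := by
      refine w.ge_ext (inv_rot_of_distTriang _ hdist) ?_ hge
      have h2 : A⟦(-1 : ℤ)⟧ ∈ w.ge (j + -1) := w.shift_mem_ge hA' (-1)
      exact w.ge_mono (n := j + -1) (by omega) h2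
    have hBle : B ∈ w.le (i + n) := by
      have : (j - 1 : ℤ) = i + n := by push_cast [hj]; ring
      exact this ▸ hB
    have hBclos := ih i B hBge hBle
    refine ExtClosure.ext (Triangle.mk f g h) hdist
      (hBclos.mono ?_) (ExtClosure.of A ⟨j, by omega, le_refl j, hAle, hA'⟩)
    rintro Y ⟨k, hk1, hk2, hk3⟩
    exact ⟨k, hk1, by omega, hk3⟩

theorem stmt_8 (w : WeightStructure C) (i j : ℤ) (hij : i ≤ j) :
    w.ge i ∩ w.le j =
      {X : C | ExtClosure {Y : C | ∃ k : ℤ, i ≤ k ∧ k ≤ j ∧ Y ∈ w.heart k} X} := by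
  ext X
  constructor
  · rintro ⟨hge, hle⟩
    have hij' : i + ((j - i).toNat : ℤ) = j := by omega
    have := key_induction w (j - i).toNat i X hge (by rw [hij']; exact hle)
    rw [hij'] at this
    exact this
  · intro hX
    induction hX with
    | of Y hY =>
      obtain ⟨k, hk1, hk2, hkle, hkge⟩ := hY
      exact ⟨w.ge_mono hk1 hkge, w.le_mono hk2 hkle⟩
    | zero Z hZ => exact ⟨w.zero_mem_ge hZ i, w.zero_mem_le hZ j⟩
    | ext T hT _ _ ih₁ ih₃ =>
      exact ⟨w.ge_ext hT ih₁.1 ih₃.1, w.le_ext_s8 hT ih₁.2 ih₃.2⟩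
end
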